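/- In a ⊴-minimal representative 𝓢 of a constructible set X, every swiss cheese B \ ⋃Sub(B,𝓢) for B on an even level of (𝓢,⊆) is nonempty. -/

import Mathlib

variable {U : Type*}

/-- A directed family: nonempty sets, any two nested or disjoint. -/
def DirFam (𝓑 : Set (Set U)) : Prop :=
  (∀ B ∈ 𝓑, B.Nonempty) ∧
    ∀ B₀ ∈ 𝓑, ∀ B₁ ∈ 𝓑, B₀ ⊆ B₁ ∨ B₁ ⊆ B₀ ∨ B₀ ∩ B₁ = ∅

/-- Constructible sets: finite boolean combinations of balls. -/
inductive Constr (𝓑 : Set (Set U)) : Set U → Prop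
  | ball {B : Set U} : B ∈ 𝓑 → Constr 𝓑 B
  | compl {X : Set U} : Constr 𝓑 X → Constr 𝓑 Xᶜ
  | union {X Y : Set U} : Constr 𝓑 X → Constr 𝓑 Y → Constr 𝓑 (X ∪ Y)

/-- Levels of a (finite) subset of a partial order: Lev 0 is the set of maximal
elements, and Lev (n+1) is Lev n of the set with its maximal elements removed. -/
def Lev {α : Type*} [PartialOrder α] : ℕ → Set α → Set α
  | 0, S => {a | a ∈ S ∧ ∀ b ∈ S, a ≤ b → a = b}
  | n + 1, S => Lev n (S \ {a | a ∈ S ∧ ∀ b ∈ S, a ≤ b → a = b})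

/-- The swiss cheese operator: the union, over balls B on even levels of 𝓢, of
B minus the union of its immediate predecessors (the next-level balls inside B). -/
def Ch (𝓢 : Set (Set U)) : Set U :=
  ⋃ n : ℕ, ⋃ B ∈ Lev (2 * n) 𝓢, B \ ⋃₀ {C | C ∈ Lev (2 * n + 1) 𝓢 ∧ C ⊆ B}

/-- A finite forest: the elements above any given element form a chain. -/
def FinForest {α : Type*} [PartialOrder α] (S : Set α) : Prop :=
  ∀ a ∈ S, IsChain (· ≤ ·) {b | b ∈ S ∧ a ≤ b}

/-- The quasi-order ⊴ on finite forests: first by cardinality, then by top-heaviness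
of the level sizes. -/
def ForestQO {α β : Type*} [PartialOrder α] [PartialOrder β] (S : Set α) (T : Set β) :
    Prop :=
  S.ncard < T.ncard ∨
    (S.ncard = T.ncard ∧
      ((∀ n, (Lev n S).ncard = (Lev n T).ncard) ∨
        ∃ n, (∀ i < n, (Lev i S).ncard = (Lev i T).ncard) ∧
          (Lev n T).ncard < (Lev n S).ncard))

lemma fin_exists_maximal_wrt {α β : Type*} [PartialOrder β] (f : α → β) (s : Set α)
    (h : s.Finite) (hs : s.Nonempty) : ∃ a ∈ s, ∀ a' ∈ s, f a ≤ f a' → f a = f a' := by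
  obtain ⟨a, ha, hmax⟩ := h.exists_maximalFor f s hs
  exact ⟨a, ha, fun a' ha' hle => le_antisymm hle (hmax ha' hle)⟩

lemma fin_exists_minimal_wrt {α β : Type*} [PartialOrder β] (f : α → β) (s : Set α)
    (h : s.Finite) (hs : s.Nonempty) : ∃ a ∈ s, ∀ a' ∈ s, f a' ≤ f a → f a = f a' := by
  obtain ⟨a, ha, hmin⟩ := h.exists_minimalFor f s hs
  exact ⟨a, ha, fun a' ha' hle => le_antisymm (hmin ha' hle) hle⟩

lemma lev_subset {α : Type*} [PartialOrder α] : ∀ (n : ℕ) (S : Set α), Lev n S ⊆ S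
  | 0, _ => fun _ ha => ha.1
  | n+1, _ => fun a ha => (lev_subset n _ ha).1

lemma finForest_subset {α : Type*} [PartialOrder α] {S T : Set α} (h : FinForest S)
    (hTS : T ⊆ S) : FinForest T := by
  intro a ha b hb c hc hbc
  exact h a (hTS ha) ⟨hTS hb.1, hb.2⟩ ⟨hTS hc.1, hc.2⟩ hbc

lemma exists_top {α : Type*} [PartialOrder α] {S : Set α} (hfin : S.Finite)
    (hF : FinForest S) {a : α} (ha : a ∈ S) (hna : ¬ ∀ b ∈ S, a ≤ b → a = b) :
    ∃ t ∈ S, a < t ∧ (∀ b ∈ S, t ≤ b → t = b) ∧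
      ∀ b ∈ S, a < b → (∀ c ∈ S, b ≤ c → b = c) → b = t := by
  push_neg at hna
  obtain ⟨b₀, hb₀S, hab₀, hne₀⟩ := hna
  have hanc : ({b | b ∈ S ∧ a < b}).Nonempty := ⟨b₀, hb₀S, lt_of_le_of_ne hab₀ hne₀⟩
  obtain ⟨t, htmem, htmax⟩ := fin_exists_maximal_wrt id _ (hfin.subset (fun _ h => h.1)) hanc
  have htS : t ∈ S := htmem.1
  have hat : a < t := htmem.2
  have htmaxS : ∀ b ∈ S, t ≤ b → t = b := by
    intro b hbS htb
    exact htmax b ⟨hbS, lt_of_lt_of_le hat htb⟩ htb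
  refine ⟨t, htS, hat, htmaxS, ?_⟩
  intro b hbS hab hbmax
  rcases eq_or_ne b t with rfl | hbt
  · rfl
  · have hcomp := hF a ha (x := b) ⟨hbS, hab.le⟩ (y := t) ⟨htS, hat.le⟩ hbt
    rcases hcomp with hle | hle
    · exact hbmax t htS hle
    · exact (htmaxS b hbS hle).symm

lemma lev_iff {α : Type*} [PartialOrder α] :
    ∀ (n : ℕ) (S : Set α), S.Finite → FinForest S →
      ∀ a : α, a ∈ Lev n S ↔ a ∈ S ∧ ({b | b ∈ S ∧ a < b}).ncard = n := by
  intro n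
  induction n with
  | zero =>
    intro S hfin hF a
    show (a ∈ S ∧ ∀ b ∈ S, a ≤ b → a = b) ↔ _
    constructor
    · rintro ⟨haS, hmax⟩
      refine ⟨haS, ?_⟩
      have : {b | b ∈ S ∧ a < b} = ∅ := by
        ext b; simp only [Set.mem_setOf_eq, Set.mem_empty_iff_false, iff_false]
        rintro ⟨hbS, hab⟩
        exact hab.ne (hmax b hbS hab.le)
      rw [this, Set.ncard_empty]
    · rintro ⟨haS, hcard⟩
      refine ⟨haS, fun b hbS hab => ?_⟩
      by_contra hne
      have : b ∈ ({b | b ∈ S ∧ a < b} : Set α) := ⟨hbS, lt_of_le_of_ne hab hne⟩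
      rw [Set.ncard_eq_zero (hfin.subset (fun _ h => h.1))] at hcard
      simp [hcard] at this
  | succ n ih =>
    intro S hfin hF a
    set M : Set α := {a | a ∈ S ∧ ∀ b ∈ S, a ≤ b → a = b} with hM
    have key : ∀ a : α, a ∈ S → a ∉ M →
        ({b | b ∈ S ∧ a < b}).ncard = ({b | b ∈ S \ M ∧ a < b}).ncard + 1 := by
      intro a haS haM
      have hna : ¬ ∀ b ∈ S, a ≤ b → a = b := fun hh => haM ⟨haS, hh⟩
      obtain ⟨t, htS, hat, htmaxS, huniq⟩ := exists_top hfin hF haS hna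
      have hset : {b | b ∈ S ∧ a < b} = insert t {b | b ∈ S \ M ∧ a < b} := by
        ext b
        simp only [Set.mem_setOf_eq, Set.mem_insert_iff, Set.mem_diff]
        constructor
        · rintro ⟨hbS, hab⟩
          by_cases hbM : b ∈ M
          · exact Or.inl (huniq b hbS hab hbM.2)
          · exact Or.inr ⟨⟨hbS, hbM⟩, hab⟩
        · rintro (rfl | ⟨⟨hbS, _⟩, hab⟩)
          · exact ⟨htS, hat⟩
          · exact ⟨hbS, hab⟩
      have htnm : t ∉ {b | b ∈ S \ M ∧ a < b} := by
        rintro ⟨⟨_, htM⟩, _⟩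
        exact htM ⟨htS, htmaxS⟩
      rw [hset, Set.ncard_insert_of_notMem htnm
        (hfin.subset (fun b hb => hb.1.1))]
    show a ∈ Lev n (S \ M) ↔ _
    rw [ih (S \ M) (hfin.sdiff (t := M)) (finForest_subset hF Set.diff_subset)]
    constructor
    · rintro ⟨⟨haS, haM⟩, hcard⟩
      exact ⟨haS, by rw [key a haS haM, hcard]⟩
    · rintro ⟨haS, hcard⟩
      have haM : a ∉ M := by
        rintro ⟨_, hmax⟩
        have : {b | b ∈ S ∧ a < b} = ∅ := by
          ext b; simp only [Set.mem_setOf_eq, Set.mem_empty_iff_false, iff_false]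
          rintro ⟨hbS, hab⟩
          exact hab.ne (hmax b hbS hab.le)
        rw [this, Set.ncard_empty] at hcard
        omega
      refine ⟨⟨haS, haM⟩, ?_⟩
      have := key a haS haM
      omega

lemma chain_mem {𝓑 : Set (Set U)} (h : DirFam 𝓑) {𝓢 : Set (Set U)} (h𝓢 : 𝓢 ⊆ 𝓑)
    {A B : Set U} (hA : A ∈ 𝓢) (hB : B ∈ 𝓢) {x : U} (hxA : x ∈ A) (hxB : x ∈ B) :
    A ⊆ B ∨ B ⊆ A := by
  rcases h.2 A (h𝓢 hA) B (h𝓢 hB) with hh | hh | hh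
  · exact Or.inl hh
  · exact Or.inr hh
  · exfalso
    have : x ∈ A ∩ B := ⟨hxA, hxB⟩
    rw [hh] at this
    exact this

lemma dirFam_forest {𝓑 : Set (Set U)} (h : DirFam 𝓑) {𝓢 : Set (Set U)} (h𝓢 : 𝓢 ⊆ 𝓑) :
    FinForest 𝓢 := by
  intro a ha B hB C hC hne
  obtain ⟨y, hy⟩ := h.1 a (h𝓢 ha)
  have hyB : y ∈ B := hB.2 hy
  have hyC : y ∈ C := hC.2 hy
  rcases chain_mem h h𝓢 hB.1 hC.1 hyB hyC with hh | hh
  · exact Or.inl hh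
  · exact Or.inr hh

lemma mem_Ch_iff {𝓑 𝓢 : Set (Set U)} (h : DirFam 𝓑) (h𝓢 : 𝓢 ⊆ 𝓑) (hfS : 𝓢.Finite)
    (x : U) : x ∈ Ch 𝓢 ↔ Odd ({A | A ∈ 𝓢 ∧ x ∈ A}).ncard := by
  have hF : FinForest 𝓢 := dirFam_forest h h𝓢
  have hTfin : ({A | A ∈ 𝓢 ∧ x ∈ A}).Finite := hfS.subset (fun _ h => h.1)
  rw [Ch]
  simp only [Set.mem_iUnion, Set.mem_diff, Set.mem_sUnion, Set.mem_setOf_eq, not_exists]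
  constructor
  · rintro ⟨n, B, hB, hxB, hno⟩
    rw [lev_iff _ _ hfS hF] at hB
    obtain ⟨hBS, hcard⟩ := hB
    have hBT : B ∈ {A | A ∈ 𝓢 ∧ x ∈ A} := ⟨hBS, hxB⟩
    have hleast : ∀ A ∈ {A | A ∈ 𝓢 ∧ x ∈ A}, B ⊆ A := by
      intro A hA
      by_contra hnot
      have hAB : A ⊂ B := by
        rcases chain_mem h h𝓢 hA.1 hBS hA.2 hxB with h1 | h1
        · exact lt_of_le_of_ne h1 (fun he => hnot (le_of_eq he.symm))
        · exact absurd h1 hnot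
      obtain ⟨C, hCmem, hCmax⟩ := fin_exists_maximal_wrt id {E | E ∈ 𝓢 ∧ A ⊆ E ∧ E ⊂ B}
        (hfS.subset fun _ h => h.1) ⟨A, hA.1, le_refl _, hAB⟩
      obtain ⟨hCS, hAC, hCB⟩ := hCmem
      have hxC : x ∈ C := hAC hA.2
      have hanc : {E | E ∈ 𝓢 ∧ C < E} = insert B {E | E ∈ 𝓢 ∧ B < E} := by
        ext E
        simp only [Set.mem_setOf_eq, Set.mem_insert_iff]
        constructor
        · rintro ⟨hES, hCE⟩
          have hxE : x ∈ E := hCE.le hxC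
          rcases eq_or_ne E B with rfl | hEB
          · exact Or.inl rfl
          rcases chain_mem h h𝓢 hES hBS hxE hxB with h1 | h1
          · exact absurd (hCmax E ⟨hES, hAC.trans hCE.le, lt_of_le_of_ne h1 hEB⟩ hCE.le)
              hCE.ne
          · exact Or.inr ⟨hES, lt_of_le_of_ne h1 (Ne.symm hEB)⟩
        · rintro (rfl | ⟨hES, hBE⟩)
          · exact ⟨hBS, hCB⟩
          · exact ⟨hES, hCB.trans hBE⟩
      have hCcard : ({E | E ∈ 𝓢 ∧ C < E}).ncard = 2 * n + 1 := by
        rw [hanc, Set.ncard_insert_of_notMem (fun hh => absurd hh.2 (lt_irrefl B)) (hfS.subset fun _ h => h.1), hcard]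
      exact hno C ⟨⟨(lev_iff _ _ hfS hF C).mpr ⟨hCS, hCcard⟩, hCB.le⟩, hxC⟩
    have hT : {A | A ∈ 𝓢 ∧ x ∈ A} = insert B {E | E ∈ 𝓢 ∧ B < E} := by
      ext E
      simp only [Set.mem_setOf_eq, Set.mem_insert_iff]
      constructor
      · rintro ⟨hES, hxE⟩
        rcases eq_or_ne E B with rfl | hne
        · exact Or.inl rfl
        · exact Or.inr ⟨hES, lt_of_le_of_ne (hleast E ⟨hES, hxE⟩) hne.symm⟩
      · rintro (rfl | ⟨hES, hBE⟩)
        · exact hBT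
        · exact ⟨hES, hBE.le hxB⟩
    rw [hT, Set.ncard_insert_of_notMem (fun hh => absurd hh.2 (lt_irrefl B)) (hfS.subset fun _ h => h.1), hcard]
    exact ⟨n, by ring⟩
  · rintro hodd
    obtain ⟨m, hm⟩ := hodd
    have hne : ({A | A ∈ 𝓢 ∧ x ∈ A}).Nonempty := by
      rw [Set.nonempty_iff_ne_empty]
      intro hemp
      rw [hemp, Set.ncard_empty] at hm
      omega
    obtain ⟨A₀, hA₀, hmin⟩ := fin_exists_minimal_wrt id _ hTfin hne
    have hleast : ∀ A ∈ {A | A ∈ 𝓢 ∧ x ∈ A}, A₀ ⊆ A := by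
      intro A hA
      rcases chain_mem h h𝓢 hA₀.1 hA.1 hA₀.2 hA.2 with h1 | h1
      · exact h1
      · exact le_of_eq (hmin A hA h1)
    have hancT : {E | E ∈ 𝓢 ∧ A₀ < E} = {A | A ∈ 𝓢 ∧ x ∈ A} \ {A₀} := by
      ext E
      simp only [Set.mem_setOf_eq, Set.mem_diff, Set.mem_singleton_iff]
      constructor
      · rintro ⟨hES, hAE⟩
        exact ⟨⟨hES, hAE.le hA₀.2⟩, fun he => hAE.ne' (he ▸ rfl)⟩
      · rintro ⟨⟨hES, hxE⟩, hne⟩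
        exact ⟨hES, lt_of_le_of_ne (hleast E ⟨hES, hxE⟩) (Ne.symm hne)⟩
    have hcard0 := Set.ncard_diff_singleton_add_one hA₀ hTfin
    refine ⟨m, A₀, (lev_iff _ _ hfS hF A₀).mpr ⟨hA₀.1, ?_⟩, hA₀.2, ?_⟩
    · rw [hancT]; omega
    · rintro C ⟨⟨hClev, hCB⟩, hxC⟩
      have hC := (lev_iff _ _ hfS hF C).mp hClev
      have hsub : A₀ ⊆ C := hleast C ⟨hC.1, hxC⟩
      have hCeq : C = A₀ := le_antisymm hCB hsub
      have h1 := hC.2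
      rw [hCeq, hancT] at h1
      omega

/-- In a ⊴-minimal representative, every swiss cheese on an even level is nonempty. -/
theorem stmt16 (𝓑 : Set (Set U)) (h : DirFam 𝓑) (hU : (Set.univ : Set U) ∈ 𝓑)
    (X : Set U) (hX : Constr 𝓑 X) (𝓢 : Set (Set U))
    (h𝓢 : 𝓢 ⊆ 𝓑) (hfS : 𝓢.Finite) (hS : Ch 𝓢 = X)
    (hminS : ∀ 𝓡 : Set (Set U), 𝓡 ⊆ 𝓑 → 𝓡.Finite → Ch 𝓡 = X → ForestQO 𝓢 𝓡) :
    ∀ (n : ℕ) (B : Set U), B ∈ Lev (2 * n) 𝓢 →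
      (B \ ⋃₀ {C | C ∈ Lev (2 * n + 1) 𝓢 ∧ C ⊆ B}).Nonempty := by
  intro n B hB
  by_contra hemp
  rw [Set.not_nonempty_iff_eq_empty] at hemp
  have hF : FinForest 𝓢 := dirFam_forest h h𝓢
  rw [lev_iff _ _ hfS hF] at hB
  obtain ⟨hBS, hcard⟩ := hB
  set K : Set (Set U) := {C | C ∈ Lev (2 * n + 1) 𝓢 ∧ C ⊆ B} with hK
  set 𝓡 : Set (Set U) := 𝓢 \ insert B K with h𝓡
  have h𝓡S : 𝓡 ⊆ 𝓢 := Set.diff_subset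
  have hfR : 𝓡.Finite := hfS.subset h𝓡S
  have hancfin : ∀ D : Set U, ({E | E ∈ 𝓢 ∧ D < E}).Finite :=
    fun D => hfS.subset fun _ hh => hh.1
  have hChR : Ch 𝓡 = X := by
    rw [← hS]
    ext x
    rw [mem_Ch_iff h (h𝓡S.trans h𝓢) hfR, mem_Ch_iff h h𝓢 hfS]
    by_cases hxB : x ∈ B
    · have hxU : x ∈ ⋃₀ {C | C ∈ Lev (2 * n + 1) 𝓢 ∧ C ⊆ B} := by
        by_contra hnx
        have hmem : x ∈ B \ ⋃₀ {C | C ∈ Lev (2 * n + 1) 𝓢 ∧ C ⊆ B} := ⟨hxB, hnx⟩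
        rw [hemp] at hmem
        exact hmem
      obtain ⟨C, hCK, hxC⟩ := hxU
      have hCS : C ∈ 𝓢 := lev_subset _ _ hCK.1
      have hCcard : ({E | E ∈ 𝓢 ∧ C < E}).ncard = 2 * n + 1 :=
        ((lev_iff _ _ hfS hF C).mp hCK.1).2
      have hCB : C ⊂ B := lt_of_le_of_ne hCK.2 (fun he => by rw [he] at hCcard; omega)
      have key : ∀ D D' : Set U, D' ∈ 𝓢 → D ⊂ D' →
          ({E | E ∈ 𝓢 ∧ D' < E}).ncard < ({E | E ∈ 𝓢 ∧ D < E}).ncard := by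
        intro D D' hD' hDD'
        have hsub : insert D' {E | E ∈ 𝓢 ∧ D' < E} ⊆ {E | E ∈ 𝓢 ∧ D < E} := by
          rintro E (rfl | ⟨hES, hE⟩)
          · exact ⟨hD', hDD'⟩
          · exact ⟨hES, hDD'.trans hE⟩
        have hle := Set.ncard_le_ncard hsub (hancfin D)
        rw [Set.ncard_insert_of_notMem (fun hh => absurd hh.2 (lt_irrefl D'))
          (hancfin D')] at hle
        omega
      have huniq : ∀ C' ∈ K, x ∈ C' → C' = C := by
        intro C' hC' hxC'
        have hC'S : C' ∈ 𝓢 := lev_subset _ _ hC'.1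
        have hC'card : ({E | E ∈ 𝓢 ∧ C' < E}).ncard = 2 * n + 1 :=
          ((lev_iff _ _ hfS hF C').mp hC'.1).2
        by_contra hne
        rcases chain_mem h h𝓢 hC'S hCS hxC' hxC with h1 | h1
        · have := key C' C hCS (lt_of_le_of_ne h1 hne); omega
        · have := key C C' hC'S (lt_of_le_of_ne h1 (Ne.symm hne)); omega
      have hTsplit : {A | A ∈ 𝓢 ∧ x ∈ A} = insert B (insert C {A | A ∈ 𝓡 ∧ x ∈ A}) := by
        ext A
        simp only [Set.mem_setOf_eq, Set.mem_insert_iff, h𝓡, Set.mem_diff]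
        constructor
        · rintro ⟨hAS, hxA⟩
          rcases eq_or_ne A B with rfl | hAB
          · exact Or.inl rfl
          by_cases hAK : A ∈ K
          · exact Or.inr (Or.inl (huniq A hAK hxA))
          · exact Or.inr (Or.inr ⟨⟨hAS, fun hh => hh.elim hAB hAK⟩, hxA⟩)
        · rintro (rfl | rfl | ⟨⟨hAS, _⟩, hxA⟩)
          · exact ⟨hBS, hxB⟩
          · exact ⟨hCS, hxC⟩
          · exact ⟨hAS, hxA⟩
      have hRfin : ({A | A ∈ 𝓡 ∧ x ∈ A}).Finite := hfR.subset fun _ hh => hh.1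
      have hBne : B ∉ insert C {A | A ∈ 𝓡 ∧ x ∈ A} := by
        rintro (heq | hh)
        · exact hCB.ne heq.symm
        · exact hh.1.2 (Or.inl rfl)
      have hCne : C ∉ {A | A ∈ 𝓡 ∧ x ∈ A} := fun hh => hh.1.2 (Or.inr hCK)
      rw [hTsplit, Set.ncard_insert_of_notMem hBne (hRfin.insert C),
        Set.ncard_insert_of_notMem hCne hRfin]
      rw [Nat.odd_add_one, Nat.odd_add_one, not_not]
    · have hTeq : {A | A ∈ 𝓡 ∧ x ∈ A} = {A | A ∈ 𝓢 ∧ x ∈ A} := by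
        ext A
        simp only [Set.mem_setOf_eq, h𝓡, Set.mem_diff, Set.mem_insert_iff]
        constructor
        · rintro ⟨⟨hAS, _⟩, hxA⟩
          exact ⟨hAS, hxA⟩
        · rintro ⟨hAS, hxA⟩
          refine ⟨⟨hAS, ?_⟩, hxA⟩
          rintro (rfl | hAK)
          · exact hxB hxA
          · exact hxB (hAK.2 hxA)
      rw [hTeq]
  have hQO := hminS 𝓡 (h𝓡S.trans h𝓢) hfR hChR
  have hlt : 𝓡.ncard < 𝓢.ncard :=
    Set.ncard_lt_ncard ⟨h𝓡S, fun hsub => (hsub hBS).2 (Or.inl rfl)⟩ hfS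
  rcases hQO with h1 | ⟨h1, _⟩ <;> omega
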